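/- Let n be even, let s_1,...,s_{n/2−1} be weight-4 vectors in F_2^n with |supp(s_i) ∩ supp(s_j)| = 2 if |i−j| = 1 and = 0 otherwise (i ≠ j), and let t_1,...,t_{n/2} be weight-2 vectors with s_i = t_i + t_{i+1}. Then the F_2-span of {d(t_i) : 1 ≤ i ≤ n/2} ∪ {e(s_j) : 1 ≤ j ≤ n/2−1} in F_2^{2n} is a code equivalent (isomorphic as a code, via a coordinate permutation) to d(E_n). -/

import Mathlib

/-- Hamming weight of a binary word. -/
def wt {n : ℕ} (v : Fin n → ZMod 2) : ℕ :=
  (Finset.univ.filter (fun i => v i ≠ 0)).card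

/-- Size of the intersection of the supports of two binary words. -/
def interCard {n : ℕ} (v w : Fin n → ZMod 2) : ℕ :=
  (Finset.univ.filter (fun i => v i ≠ 0 ∧ w i ≠ 0)).card

/-- The doubling map `d : F₂ⁿ → F₂^{2n}`, `(c₁,…,cₙ) ↦ (c₁,c₁,c₂,c₂,…,cₙ,cₙ)`. -/
def dbl {n : ℕ} (c : Fin n → ZMod 2) : Fin (2 * n) → ZMod 2 :=
  fun i => c ⟨(i : ℕ) / 2, by have := i.isLt; omega⟩

/-- The map `e : F₂ⁿ → F₂^{2n}`, `(c₁,…,cₙ) ↦ (0,c₁,0,c₂,…,0,cₙ)`. -/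
def emap {n : ℕ} (c : Fin n → ZMod 2) : Fin (2 * n) → ZMod 2 :=
  fun i => if (i : ℕ) % 2 = 1 then c ⟨(i : ℕ) / 2, by have := i.isLt; omega⟩ else 0

/-- The even-weight code `𝓔ₙ ⊆ F₂ⁿ`. -/
def evenCode (n : ℕ) : Set (Fin n → ZMod 2) := {c | Even (wt c)}

namespace SdeAux

def supp {n : ℕ} (v : Fin n → ZMod 2) : Finset (Fin n) :=
  Finset.univ.filter (fun i => v i ≠ 0)

lemma wt_eq {n : ℕ} (v : Fin n → ZMod 2) : wt v = (supp v).card := rfl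

lemma zmod2 (x : ZMod 2) : x = 0 ∨ x = 1 := by revert x; decide

lemma mem_supp {n : ℕ} {v : Fin n → ZMod 2} {k : Fin n} : k ∈ supp v ↔ v k = 1 := by
  simp only [supp, Finset.mem_filter, Finset.mem_univ, true_and]
  rcases zmod2 (v k) with h | h <;> simp [h]

lemma not_mem_supp {n : ℕ} {v : Fin n → ZMod 2} {k : Fin n} : k ∉ supp v ↔ v k = 0 := by
  rw [mem_supp]
  rcases zmod2 (v k) with h | h <;> simp [h]

lemma supp_add {n : ℕ} (u v : Fin n → ZMod 2) :
    supp (u + v) = (supp u ∪ supp v) \ (supp u ∩ supp v) := by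
  ext k
  simp only [Finset.mem_sdiff, Finset.mem_union, Finset.mem_inter, mem_supp, Pi.add_apply]
  rcases zmod2 (u k) with h | h <;> rcases zmod2 (v k) with h' | h' <;> simp [h, h']

lemma interCard_eq {n : ℕ} (v w : Fin n → ZMod 2) :
    interCard v w = (supp v ∩ supp w).card := by
  unfold interCard
  congr 1
  ext k
  simp [supp, Finset.mem_filter]

lemma disjoint_of_add {n : ℕ} {u v : Fin n → ZMod 2}
    (hu : (supp u).card = 2) (hv : (supp v).card = 2) (huv : (supp (u + v)).card = 4) :
    Disjoint (supp u) (supp v) ∧ supp (u + v) = supp u ∪ supp v := by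
  have h1 : (supp u ∪ supp v).card + (supp u ∩ supp v).card = 4 := by
    rw [Finset.card_union_add_card_inter, hu, hv]
  have hsub : supp u ∩ supp v ⊆ supp u ∪ supp v :=
    (Finset.inter_subset_left).trans Finset.subset_union_left
  have h2 : (supp (u + v)).card = (supp u ∪ supp v).card - (supp u ∩ supp v).card := by
    rw [supp_add, Finset.card_sdiff_of_subset hsub]
  have hle : (supp u ∪ supp v).card ≤ 4 := by
    have := Finset.card_union_le (supp u) (supp v); omega
  have hinter : (supp u ∩ supp v).card = 0 := by omega
  have hd : Disjoint (supp u) (supp v) := by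
    rw [Finset.disjoint_iff_inter_eq_empty, ← Finset.card_eq_zero]; exact hinter
  refine ⟨hd, ?_⟩
  rw [supp_add, Finset.card_eq_zero.mp hinter, Finset.sdiff_empty]

section Main
variable {m : ℕ}

lemma tdisj (hm : 1 ≤ m)
    (s : Fin (m - 1) → Fin (2 * m) → ZMod 2) (t : Fin m → Fin (2 * m) → ZMod 2)
    (hs4 : ∀ i, wt (s i) = 4) (ht2 : ∀ i, wt (t i) = 2)
    (hst : ∀ i : Fin (m - 1),
      s i = t ⟨(i : ℕ), Nat.lt_of_lt_of_le i.isLt (Nat.sub_le m 1)⟩ + t ⟨(i : ℕ) + 1, Nat.add_lt_of_lt_sub i.isLt⟩)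
    (hint : ∀ i j : Fin (m - 1), i ≠ j →
      interCard (s i) (s j) =
        if (i : ℕ) + 1 = (j : ℕ) ∨ (j : ℕ) + 1 = (i : ℕ) then 2 else 0) :
    ∀ i j : Fin m, i ≠ j → Disjoint (supp (t i)) (supp (t j)) := by
  -- adjacent facts
  have hadj : ∀ i : Fin (m - 1),
      Disjoint (supp (t ⟨(i : ℕ), Nat.lt_of_lt_of_le i.isLt (Nat.sub_le m 1)⟩))
        (supp (t ⟨(i : ℕ) + 1, Nat.add_lt_of_lt_sub i.isLt⟩)) ∧
      supp (s i) = supp (t ⟨(i : ℕ), Nat.lt_of_lt_of_le i.isLt (Nat.sub_le m 1)⟩) ∪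
        supp (t ⟨(i : ℕ) + 1, Nat.add_lt_of_lt_sub i.isLt⟩) := by
    intro i
    have h4 := hs4 i
    rw [wt_eq, hst i] at h4
    have := disjoint_of_add (by rw [← wt_eq]; exact ht2 _) (by rw [← wt_eq]; exact ht2 _) h4
    refine ⟨this.1, ?_⟩
    rw [hst i]; exact this.2
  -- main claim for i < j on naturals
  have key : ∀ (i j : ℕ) (hi : i < m) (hj : j < m), i < j →
      Disjoint (supp (t ⟨i, hi⟩)) (supp (t ⟨j, hj⟩)) := by
    intro i j hi hj hij
    rcases Nat.lt_or_ge j (i + 2) with hj2 | hj2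
    · -- j = i + 1
      have hje : j = i + 1 := by omega
      subst hje
      have him : i < m - 1 := by omega
      exact (hadj ⟨i, him⟩).1
    rcases Nat.lt_or_ge j (i + 3) with hj3 | hj3
    · -- j = i + 2
      have hje : j = i + 2 := by omega
      subst hje
      have hi1 : i < m - 1 := by omega
      have hi2 : i + 1 < m - 1 := by omega
      have hI := hint ⟨i, hi1⟩ ⟨i + 1, hi2⟩ (by simp)
      rw [if_pos (by left; rfl)] at hI
      rw [interCard_eq] at hI
      have hu1 := (hadj ⟨i, hi1⟩).2
      have hu2 := (hadj ⟨i + 1, hi2⟩).2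
      have hd1 := (hadj ⟨i, hi1⟩).1
      have hd2 := (hadj ⟨i + 1, hi2⟩).1
      set T0 := supp (t ⟨i, hi⟩) with hT0
      set T1 := supp (t ⟨i + 1, by omega⟩) with hT1
      set T2 := supp (t ⟨i + 2, hj⟩) with hT2
      have hX : T1 ⊆ supp (s ⟨i, hi1⟩) ∩ supp (s ⟨i + 1, hi2⟩) := by
        rw [hu1, hu2]
        intro k hk
        simp only [Finset.mem_inter, Finset.mem_union]
        exact ⟨Or.inr hk, Or.inl hk⟩
      have hcardT1 : T1.card = 2 := by rw [hT1, ← wt_eq]; exact ht2 _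
      have hXeq : T1 = supp (s ⟨i, hi1⟩) ∩ supp (s ⟨i + 1, hi2⟩) :=
        Finset.eq_of_subset_of_card_le hX (by omega)
      rw [Finset.disjoint_left]
      intro k hk0 hk2
      have hkX : k ∈ T1 := by
        rw [hXeq, Finset.mem_inter, hu1, hu2]
        constructor
        · exact Finset.mem_union_left _ hk0
        · exact Finset.mem_union_right _ hk2
      exact Finset.disjoint_left.mp hd1 hk0 hkX
    · -- j ≥ i + 3
      have hi1 : i < m - 1 := by omega
      have hj1 : j - 1 < m - 1 := by omega
      have hI := hint ⟨i, hi1⟩ ⟨j - 1, hj1⟩ (by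
        intro h
        have := congrArg Fin.val h
        simp at this; omega)
      rw [if_neg (by simp; omega)] at hI
      rw [interCard_eq, Finset.card_eq_zero, ← Finset.disjoint_iff_inter_eq_empty] at hI
      have hu1 := (hadj ⟨i, hi1⟩).2
      have hu2 := (hadj ⟨j - 1, hj1⟩).2
      have hsub1 : supp (t ⟨i, hi⟩) ⊆ supp (s ⟨i, hi1⟩) := by
        rw [hu1]; exact Finset.subset_union_left
      have hsub2 : supp (t ⟨j, hj⟩) ⊆ supp (s ⟨j - 1, hj1⟩) := by
        rw [hu2]
        have : (⟨j, hj⟩ : Fin m) = ⟨(j - 1) + 1, by omega⟩ := by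
          apply Fin.ext; simp; omega
        rw [this]
        exact Finset.subset_union_right
      exact Finset.disjoint_of_subset_left hsub1 (Finset.disjoint_of_subset_right hsub2 hI)
  intro i j hij
  rcases Nat.lt_or_ge (i : ℕ) (j : ℕ) with h | h
  · have := key i j i.isLt j.isLt h
    simpa using this
  · have hlt : (j : ℕ) < (i : ℕ) := by
      rcases Nat.lt_or_ge (j : ℕ) (i : ℕ) with h' | h'
      · exact h'
      · exact absurd (Fin.ext (by omega)) hij
    have := (key j i j.isLt i.isLt hlt).symm
    simpa using this

end Main

/-- even coordinate embedding -/
def ev {n : ℕ} (k : Fin n) : Fin (2 * n) := ⟨2 * (k : ℕ), by have := k.isLt; omega⟩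

/-- odd coordinate embedding -/
def od {n : ℕ} (k : Fin n) : Fin (2 * n) := ⟨2 * (k : ℕ) + 1, by have := k.isLt; omega⟩

@[simp] lemma dbl_ev {n : ℕ} (c : Fin n → ZMod 2) (k : Fin n) : dbl c (ev k) = c k := by
  unfold dbl ev; congr 1; apply Fin.ext
  show (2 * (k : ℕ)) / 2 = (k : ℕ); omega

@[simp] lemma dbl_od {n : ℕ} (c : Fin n → ZMod 2) (k : Fin n) : dbl c (od k) = c k := by
  unfold dbl od; congr 1; apply Fin.ext
  show (2 * (k : ℕ) + 1) / 2 = (k : ℕ); omega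

@[simp] lemma emap_ev {n : ℕ} (c : Fin n → ZMod 2) (k : Fin n) : emap c (ev k) = 0 := by
  unfold emap ev; simp [Nat.mul_mod_right]

@[simp] lemma emap_od {n : ℕ} (c : Fin n → ZMod 2) (k : Fin n) : emap c (od k) = c k := by
  unfold emap od
  have h1 : (2 * (k : ℕ) + 1) % 2 = 1 := by omega
  rw [if_pos h1]
  congr 1; apply Fin.ext
  show (2 * (k : ℕ) + 1) / 2 = (k : ℕ); omega

lemma exists_evod {n : ℕ} (x : Fin (2 * n)) : ∃ k : Fin n, x = ev k ∨ x = od k := by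
  have hx := x.isLt
  refine ⟨⟨(x : ℕ) / 2, by omega⟩, ?_⟩
  rcases Nat.even_or_odd (x : ℕ) with h | h
  · obtain ⟨c, hc⟩ := h
    left; apply Fin.ext
    show (x : ℕ) = 2 * ((x : ℕ) / 2); omega
  · obtain ⟨c, hc⟩ := h
    right; apply Fin.ext
    show (x : ℕ) = 2 * ((x : ℕ) / 2) + 1; omega


section Pairs
variable {m : ℕ} (a b : Fin m → Fin (2 * m)) (t : Fin m → Fin (2 * m) → ZMod 2)

/-- the pairing map -/
def psi (q : Fin m × Fin 2) : Fin (2 * m) := if q.2 = 0 then a q.1 else b q.1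

variable (hab : ∀ i, a i ≠ b i) (hsuppt : ∀ i, supp (t i) = {a i, b i})
  (hdisj : ∀ i j : Fin m, i ≠ j → Disjoint (supp (t i)) (supp (t j)))

include hab hsuppt hdisj

lemma psi_mem (q : Fin m × Fin 2) : psi a b q ∈ supp (t q.1) := by
  rw [hsuppt]
  unfold psi
  split <;> simp

lemma psi_inj : Function.Injective (psi a b) := by
  intro p q h
  have hp := psi_mem a b t hab hsuppt hdisj p
  have hq := psi_mem a b t hab hsuppt hdisj q
  have h1 : p.1 = q.1 := by
    by_contra hne
    exact Finset.disjoint_left.mp (hdisj _ _ hne) hp (h ▸ hq)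
  have h2 : p.2 = q.2 := by
    unfold psi at h
    rw [h1] at h
    have hp2 : p.2 = 0 ∨ p.2 = 1 := by omega
    have hq2 : q.2 = 0 ∨ q.2 = 1 := by omega
    rcases hp2 with h2 | h2 <;> rcases hq2 with h3 | h3 <;>
        rw [h2, h3] at h ⊢ <;> simp at h ⊢
    · exact absurd h (hab _)
    · exact absurd h.symm (hab _)
  exact Prod.ext h1 h2

lemma psi_bij : Function.Bijective (psi a b) := by
  rw [Fintype.bijective_iff_injective_and_card]
  refine ⟨psi_inj a b t hab hsuppt hdisj, by simp; ring⟩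

lemma exists_pair (k : Fin (2 * m)) : ∃ i, k = a i ∨ k = b i := by
  obtain ⟨⟨i, p⟩, hp⟩ := (psi_bij a b t hab hsuppt hdisj).2 k
  refine ⟨i, ?_⟩
  unfold psi at hp
  by_cases h : p = 0
  · left; rw [← hp, if_pos h]
  · right; rw [← hp, if_neg h]

lemma t_apply_self (i : Fin m) : t i (a i) = 1 ∧ t i (b i) = 1 := by
  constructor <;> (rw [← mem_supp, hsuppt]; simp)

lemma t_apply_ne {i j : Fin m} (h : j ≠ i) : t i (a j) = 0 ∧ t i (b j) = 0 := by
  have ha : a j ∈ supp (t j) := by rw [hsuppt]; simp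
  have hb : b j ∈ supp (t j) := by rw [hsuppt]; simp
  have hd := hdisj j i h
  constructor <;> rw [← not_mem_supp]
  · exact Finset.disjoint_left.mp hd ha
  · exact Finset.disjoint_left.mp hd hb

lemma t_const (i j : Fin m) : t i (a j) = t i (b j) := by
  by_cases h : j = i
  · subst h
    rw [(t_apply_self a b t hab hsuppt hdisj _).1, (t_apply_self a b t hab hsuppt hdisj _).2]
  · rw [(t_apply_ne a b t hab hsuppt hdisj h).1, (t_apply_ne a b t hab hsuppt hdisj h).2]

end Pairs

section Span
variable {m : ℕ} (a b : Fin m → Fin (2 * m))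

/-- The submodule of `F₂^{4m}` cut out by the linear conditions characterizing the span. -/
def condC : Submodule (ZMod 2) (Fin (2 * (2 * m)) → ZMod 2) where
  carrier := {v | (∀ i, v (ev (a i)) = v (ev (b i)) ∧ v (od (a i)) = v (od (b i))) ∧
      ∑ i, (v (ev (a i)) + v (od (a i))) = 0}
  add_mem' := by
    intro u v hu hv
    refine ⟨fun i => ⟨?_, ?_⟩, ?_⟩
    · simp only [Pi.add_apply, (hu.1 i).1, (hv.1 i).1]
    · simp only [Pi.add_apply, (hu.1 i).2, (hv.1 i).2]
    · simp only [Pi.add_apply]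
      have h : ∑ i, (u (ev (a i)) + v (ev (a i)) + (u (od (a i)) + v (od (a i)))) =
          ∑ i, (u (ev (a i)) + u (od (a i))) + ∑ i, (v (ev (a i)) + v (od (a i))) := by
        rw [← Finset.sum_add_distrib]
        apply Finset.sum_congr rfl
        intros; ring
      rw [h, hu.2, hv.2, add_zero]
  zero_mem' := by simp
  smul_mem' := by
    intro c v hv
    rcases zmod2 c with h | h <;> subst h
    · simp only [zero_smul]
      exact ⟨fun i => ⟨rfl, rfl⟩, by simp⟩
    · simpa only [one_smul] using hv

lemma mem_condC {v : Fin (2 * (2 * m)) → ZMod 2} :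
    v ∈ condC a b ↔ ((∀ i, v (ev (a i)) = v (ev (b i)) ∧ v (od (a i)) = v (od (b i))) ∧
      ∑ i, (v (ev (a i)) + v (od (a i))) = 0) := Iff.rfl

variable (t : Fin m → Fin (2 * m) → ZMod 2)
  (hab : ∀ i, a i ≠ b i) (hsuppt : ∀ i, supp (t i) = {a i, b i})
  (hdisj : ∀ i j : Fin m, i ≠ j → Disjoint (supp (t i)) (supp (t j)))

include hab hsuppt hdisj

lemma sum_t_a (i0 : Fin m) : ∑ i', t i0 (a i') = 1 := by
  rw [Finset.sum_eq_single i0]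
  · exact (t_apply_self a b t hab hsuppt hdisj i0).1
  · intro i' _ hne
    exact (t_apply_ne a b t hab hsuppt hdisj hne).1
  · intro h; exact absurd (Finset.mem_univ _) h

variable (hm : 1 ≤ m) (s : Fin (m - 1) → Fin (2 * m) → ZMod 2)
  (hst : ∀ i : Fin (m - 1),
    s i = t ⟨(i : ℕ), Nat.lt_of_lt_of_le i.isLt (Nat.sub_le m 1)⟩ + t ⟨(i : ℕ) + 1, Nat.add_lt_of_lt_sub i.isLt⟩)

include hst

lemma span_le_condC :
    Submodule.span (ZMod 2)
      (Set.range (fun i => dbl (t i)) ∪ Set.range (fun j => emap (s j))) ≤ condC a b := by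
  rw [Submodule.span_le]
  rintro v (⟨i, rfl⟩ | ⟨j, rfl⟩)
  · refine ⟨fun i' => ⟨?_, ?_⟩, ?_⟩
    · simp only [dbl_ev]
      exact t_const a b t hab hsuppt hdisj i i'
    · simp only [dbl_od]
      exact t_const a b t hab hsuppt hdisj i i'
    · apply Finset.sum_eq_zero
      intro i' _
      simp only [dbl_ev, dbl_od]
      rcases zmod2 (t i (a i')) with h | h <;> rw [h] <;> decide
  · refine ⟨fun i' => ⟨?_, ?_⟩, ?_⟩
    · simp only [emap_ev]
    · simp only [emap_od]
      rw [hst j]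
      simp only [Pi.add_apply]
      rw [t_const a b t hab hsuppt hdisj _ i', t_const a b t hab hsuppt hdisj _ i']
    · simp only [emap_ev, emap_od, zero_add]
      have h : ∑ i', s j (a i') =
          ∑ i', (t ⟨(j : ℕ), Nat.lt_of_lt_of_le j.isLt (Nat.sub_le m 1)⟩ (a i') +
            t ⟨(j : ℕ) + 1, Nat.add_lt_of_lt_sub j.isLt⟩ (a i')) := by
        apply Finset.sum_congr rfl
        intro i' _
        rw [hst j]; rfl
      rw [h, Finset.sum_add_distrib, sum_t_a a b t hab hsuppt hdisj,
        sum_t_a a b t hab hsuppt hdisj]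
      decide

include hm

lemma condC_le_span :
    condC a b ≤ Submodule.span (ZMod 2)
      (Set.range (fun i => dbl (t i)) ∪ Set.range (fun j => emap (s j))) := by
  intro v hv
  obtain ⟨hpair, hsum⟩ := hv
  set γ : Fin m → ZMod 2 := fun i => v (ev (a i)) + v (od (a i)) with hγ
  set γ' : ℕ → ZMod 2 := fun l => if h : l < m then γ ⟨l, h⟩ else 0 with hγ'
  set B : ℕ → ZMod 2 := fun jn => ∑ l ∈ Finset.range (jn + 1), γ' l with hB
  have hγm : ∀ i : Fin m, γ' (i : ℕ) = γ i := fun i => dif_pos i.isLt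
  have hBm : B (m - 1) = 0 := by
    have h1 : m - 1 + 1 = m := by omega
    have h2 : B (m - 1) = ∑ l ∈ Finset.range m, γ' l := by rw [hB]; simp [h1]
    have h3 : ∑ i : Fin m, γ' (i : ℕ) = ∑ l ∈ Finset.range m, γ' l :=
      Fin.sum_univ_eq_sum_range γ' m
    rw [h2, ← h3]
    rw [show ∑ i : Fin m, γ' (i : ℕ) = ∑ i : Fin m, γ i from
      Finset.sum_congr rfl (fun i _ => hγm i)]
    exact hsum
  have hcomb : ∀ i0 : Fin m,
      B (i0 : ℕ) + (if 1 ≤ (i0 : ℕ) then B ((i0 : ℕ) - 1) else 0) = γ i0 := by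
    intro i0
    rcases Nat.eq_zero_or_pos (i0 : ℕ) with h0 | h0
    · rw [if_neg (by omega), add_zero]
      have hb0 : B 0 = γ' 0 := by
        simp [hB]
      rw [h0, hb0]
      have he : i0 = ⟨0, by omega⟩ := Fin.ext (by simpa using h0)
      exact (hγm ⟨0, by omega⟩).trans (congrArg γ he.symm)
    · obtain ⟨l, hl⟩ : ∃ l, (i0 : ℕ) = l + 1 := ⟨(i0 : ℕ) - 1, by omega⟩
      rw [if_pos (by omega), hl]
      simp only [Nat.add_sub_cancel]
      have hstep : B (l + 1) = B l + γ' (l + 1) := by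
        simp only [hB]
        exact Finset.sum_range_succ γ' (l + 1)
      rw [hstep]
      have hchar : ∀ x y : ZMod 2, x + y + x = y := by decide
      rw [hchar]
      have he : i0 = ⟨l + 1, by have := i0.isLt; omega⟩ := Fin.ext (by simpa using hl)
      exact (hγm ⟨l + 1, by have := i0.isLt; omega⟩).trans (congrArg γ he.symm)
  have hvspan : v = ∑ i, v (ev (a i)) • dbl (t i) +
      ∑ j : Fin (m - 1), B (j : ℕ) • emap (s j) := by
    funext x
    obtain ⟨k, hk⟩ := exists_evod x
    obtain ⟨i0, hk0⟩ := exists_pair a b t hab hsuppt hdisj k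
    have heval : ∀ x' : Fin (2 * (2 * m)),
        (∑ i, v (ev (a i)) • dbl (t i) + ∑ j : Fin (m - 1), B (j : ℕ) • emap (s j)) x' =
        ∑ i, v (ev (a i)) * dbl (t i) x' + ∑ j : Fin (m - 1), B (j : ℕ) * emap (s j) x' := by
      intro x'
      simp [Finset.sum_apply, Pi.add_apply, Pi.smul_apply, smul_eq_mul]
    have hvevk : v (ev k) = v (ev (a i0)) := by
      rcases hk0 with rfl | rfl
      · rfl
      · exact ((hpair i0).1).symm
    have hvodk : v (od k) = v (od (a i0)) := by
      rcases hk0 with rfl | rfl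
      · rfl
      · exact ((hpair i0).2).symm
    have ht_k : ∀ i, t i k = if i = i0 then 1 else 0 := by
      intro i
      by_cases h : i = i0
      · subst h
        rw [if_pos rfl]
        rcases hk0 with rfl | rfl
        · exact (t_apply_self a b t hab hsuppt hdisj i).1
        · exact (t_apply_self a b t hab hsuppt hdisj i).2
      · rw [if_neg h]
        rcases hk0 with rfl | rfl
        · exact (t_apply_ne a b t hab hsuppt hdisj (Ne.symm h)).1
        · exact (t_apply_ne a b t hab hsuppt hdisj (Ne.symm h)).2
    have hsum1 : ∑ i, v (ev (a i)) * t i k = v (ev (a i0)) := by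
      rw [Finset.sum_eq_single i0]
      · rw [ht_k, if_pos rfl, mul_one]
      · intro i _ hne
        rw [ht_k, if_neg hne, mul_zero]
      · intro h; exact absurd (Finset.mem_univ _) h
    have hsum2 : ∑ j : Fin (m - 1), B (j : ℕ) * s j k = γ i0 := by
      have e1 : ∑ j : Fin (m - 1), B (j : ℕ) * s j k =
          (∑ j : Fin (m - 1), B (j : ℕ) * t ⟨(j : ℕ), Nat.lt_of_lt_of_le j.isLt (Nat.sub_le m 1)⟩ k) +
          ∑ j : Fin (m - 1), B (j : ℕ) * t ⟨(j : ℕ) + 1, Nat.add_lt_of_lt_sub j.isLt⟩ k := by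
        rw [← Finset.sum_add_distrib]
        apply Finset.sum_congr rfl
        intro j _
        rw [hst j]
        show B (j : ℕ) * (_ + _) = _
        rw [mul_add]
      have eSA : (∑ j : Fin (m - 1), B (j : ℕ) *
          t ⟨(j : ℕ), Nat.lt_of_lt_of_le j.isLt (Nat.sub_le m 1)⟩ k) = B (i0 : ℕ) := by
        by_cases h : (i0 : ℕ) < m - 1
        · rw [Finset.sum_eq_single (⟨(i0 : ℕ), h⟩ : Fin (m - 1))]
          · rw [ht_k, if_pos (Fin.ext rfl), mul_one]
          · intro j _ hne
            rw [ht_k, if_neg, mul_zero]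
            intro hc
            apply hne
            apply Fin.ext
            have hv := congrArg Fin.val hc
            exact hv
          · intro h'; exact absurd (Finset.mem_univ _) h'
        · have hi0 : (i0 : ℕ) = m - 1 := by have := i0.isLt; omega
          rw [Finset.sum_eq_zero, hi0, hBm]
          intro j _
          rw [ht_k, if_neg, mul_zero]
          intro hc
          have := congrArg Fin.val hc
          simp only at this
          have := j.isLt
          omega
      have eSB : (∑ j : Fin (m - 1), B (j : ℕ) *
          t ⟨(j : ℕ) + 1, Nat.add_lt_of_lt_sub j.isLt⟩ k) =
          (if 1 ≤ (i0 : ℕ) then B ((i0 : ℕ) - 1) else 0) := by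
        by_cases h : 1 ≤ (i0 : ℕ)
        · rw [if_pos h]
          have hj0 : (i0 : ℕ) - 1 < m - 1 := by have := i0.isLt; omega
          rw [Finset.sum_eq_single (⟨(i0 : ℕ) - 1, hj0⟩ : Fin (m - 1))]
          · rw [ht_k, if_pos (Fin.ext (by simp; omega)), mul_one]
          · intro j _ hne
            rw [ht_k, if_neg, mul_zero]
            intro hc
            have hcv := congrArg Fin.val hc
            simp only at hcv
            exact hne (Fin.ext (by simp; omega))
          · intro h'; exact absurd (Finset.mem_univ _) h'
        · rw [if_neg h]
          apply Finset.sum_eq_zero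
          intro j _
          rw [ht_k, if_neg, mul_zero]
          intro hc
          have := congrArg Fin.val hc
          simp only at this
          omega
      rw [e1, eSA, eSB]
      exact hcomb i0
    rcases hk with rfl | rfl
    · rw [heval]
      simp only [dbl_ev, emap_ev, mul_zero, Finset.sum_const_zero, add_zero]
      rw [hsum1, hvevk]
    · rw [heval]
      simp only [dbl_od, emap_od]
      rw [hsum1, hsum2, hvodk, hγ]
      have hchar : ∀ x y : ZMod 2, y = x + (x + y) := by decide
      exact hchar _ _
  rw [hvspan]
  apply Submodule.add_mem
  · apply Submodule.sum_mem
    intro i _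
    exact Submodule.smul_mem _ _
      (Submodule.subset_span (Set.mem_union_left _ ⟨i, rfl⟩))
  · apply Submodule.sum_mem
    intro j _
    exact Submodule.smul_mem _ _
      (Submodule.subset_span (Set.mem_union_right _ ⟨j, rfl⟩))


end Span

section Even

lemma even_wt_iff {n : ℕ} (c : Fin n → ZMod 2) : Even (wt c) ↔ ∑ k, c k = 0 := by
  have h1 : ∑ k, c k = ((wt c : ℕ) : ZMod 2) := by
    rw [wt_eq]
    rw [← Finset.sum_subset (Finset.subset_univ (supp c))
      (fun x _ hx => not_mem_supp.mp hx)]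
    rw [Finset.sum_congr rfl (fun x hx => mem_supp.mp hx)]
    simp [Finset.sum_const, nsmul_eq_mul]
  rw [h1, ZMod.natCast_eq_zero_iff]
  rw [Nat.even_iff]
  omega

/-- The image of the even-weight code under doubling, characterized by conditions. -/
def condD (n : ℕ) : Set (Fin (2 * n) → ZMod 2) :=
  {w | (∀ k : Fin n, w (ev k) = w (od k)) ∧ ∑ k, w (ev k) = 0}

lemma dbl_image_eq (n : ℕ) : dbl '' evenCode n = condD n := by
  ext w
  constructor
  · rintro ⟨c, hc, rfl⟩
    refine ⟨fun k => by simp, ?_⟩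
    simp only [dbl_ev]
    exact (even_wt_iff c).mp hc
  · rintro ⟨h1, h2⟩
    refine ⟨fun k => w (ev k), (even_wt_iff _).mpr h2, ?_⟩
    funext x
    obtain ⟨k, hk | hk⟩ := exists_evod x <;> subst hk
    · rw [dbl_ev]
    · rw [dbl_od, ← h1 k]

end Even

section Sigma

/-- decomposition of a doubled index set -/
def dec {n : ℕ} : Fin (2 * n) ≃ Fin n × Fin 2 where
  toFun x := (⟨(x : ℕ) / 2, by have := x.isLt; omega⟩, ⟨(x : ℕ) % 2, by omega⟩)
  invFun q := ⟨2 * (q.1 : ℕ) + (q.2 : ℕ), by have := q.1.isLt; have := q.2.isLt; omega⟩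
  left_inv x := by
    apply Fin.ext
    show 2 * ((x : ℕ) / 2) + (x : ℕ) % 2 = (x : ℕ)
    omega
  right_inv q := by
    have h1 := q.1.isLt; have h2 := q.2.isLt
    refine Prod.ext (Fin.ext ?_) (Fin.ext ?_)
    · show (2 * (q.1 : ℕ) + (q.2 : ℕ)) / 2 = (q.1 : ℕ); omega
    · show (2 * (q.1 : ℕ) + (q.2 : ℕ)) % 2 = (q.2 : ℕ); omega

lemma dec_ev {n : ℕ} (k : Fin n) : dec (ev k) = (k, 0) := by
  refine Prod.ext (Fin.ext ?_) (Fin.ext ?_)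
  · show (2 * (k : ℕ)) / 2 = (k : ℕ); omega
  · show (2 * (k : ℕ)) % 2 = ((0 : Fin 2) : ℕ); omega

lemma dec_od {n : ℕ} (k : Fin n) : dec (od k) = (k, 1) := by
  refine Prod.ext (Fin.ext ?_) (Fin.ext ?_)
  · show (2 * (k : ℕ) + 1) / 2 = (k : ℕ); omega
  · show (2 * (k : ℕ) + 1) % 2 = ((1 : Fin 2) : ℕ); omega

lemma dec_symm_zero {n : ℕ} (k : Fin n) : dec.symm (k, 0) = ev k := by
  rw [← dec_ev k, Equiv.symm_apply_apply]

lemma dec_symm_one {n : ℕ} (k : Fin n) : dec.symm (k, 1) = od k := by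
  rw [← dec_od k, Equiv.symm_apply_apply]

/-- middle shuffle `((i,r),p) ↦ ((i,p),r)` -/
def shuffle {m : ℕ} : (Fin m × Fin 2) × Fin 2 ≃ (Fin m × Fin 2) × Fin 2 where
  toFun q := ((q.1.1, q.2), q.1.2)
  invFun q := ((q.1.1, q.2), q.1.2)
  left_inv q := rfl
  right_inv q := rfl

variable {m : ℕ} (a b : Fin m → Fin (2 * m)) (t : Fin m → Fin (2 * m) → ZMod 2)
  (hab : ∀ i, a i ≠ b i) (hsuppt : ∀ i, supp (t i) = {a i, b i})
  (hdisj : ∀ i j : Fin m, i ≠ j → Disjoint (supp (t i)) (supp (t j)))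

/-- the coordinate permutation -/
noncomputable def sigmaPerm : Equiv.Perm (Fin (2 * (2 * m))) :=
  dec.trans ((Equiv.prodCongr dec (Equiv.refl (Fin 2))).trans (shuffle.trans
    ((Equiv.prodCongr (Equiv.ofBijective (psi a b) (psi_bij a b t hab hsuppt hdisj))
      (Equiv.refl (Fin 2))).trans dec.symm)))

lemma sigma_ev (i : Fin m) (r : Fin 2) :
    sigmaPerm a b t hab hsuppt hdisj (ev (dec.symm (i, r))) = dec.symm (a i, r) := by
  unfold sigmaPerm
  simp only [Equiv.trans_apply, dec_ev, Equiv.prodCongr_apply, Equiv.coe_refl,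
    Prod.map_fst, Prod.map_snd, Equiv.apply_symm_apply, Prod.map_apply, id_eq]
  show dec.symm ((Equiv.ofBijective (psi a b) _) (i, 0), r) = _
  rw [Equiv.ofBijective_apply]
  unfold psi
  simp

lemma sigma_od (i : Fin m) (r : Fin 2) :
    sigmaPerm a b t hab hsuppt hdisj (od (dec.symm (i, r))) = dec.symm (b i, r) := by
  unfold sigmaPerm
  simp only [Equiv.trans_apply, dec_od, Equiv.prodCongr_apply, Equiv.coe_refl,
    Prod.map_fst, Prod.map_snd, Equiv.apply_symm_apply, Prod.map_apply, id_eq]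
  show dec.symm ((Equiv.ofBijective (psi a b) _) (i, 1), r) = _
  rw [Equiv.ofBijective_apply]
  unfold psi
  simp

lemma transfer (v : Fin (2 * (2 * m)) → ZMod 2) :
    v ∘ ⇑(sigmaPerm a b t hab hsuppt hdisj) ∈ condD (2 * m) ↔ v ∈ condC a b := by
  set σ := sigmaPerm a b t hab hsuppt hdisj with hσ
  have hpair : (∀ k : Fin (2 * m), (v ∘ ⇑σ) (ev k) = (v ∘ ⇑σ) (od k)) ↔
      ∀ i : Fin m, v (ev (a i)) = v (ev (b i)) ∧ v (od (a i)) = v (od (b i)) := by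
    constructor
    · intro h i
      constructor
      · have h0 := h (dec.symm (i, 0))
        show v (ev (a i)) = v (ev (b i))
        rw [← dec_symm_zero (a i), ← dec_symm_zero (b i)]
        have e1 : (v ∘ ⇑σ) (ev (dec.symm (i, 0))) = v (dec.symm (a i, 0)) := by
          show v (σ (ev (dec.symm (i, 0)))) = _
          rw [hσ, sigma_ev]
        have e2 : (v ∘ ⇑σ) (od (dec.symm (i, 0))) = v (dec.symm (b i, 0)) := by
          show v (σ (od (dec.symm (i, 0)))) = _
          rw [hσ, sigma_od]
        rw [e1, e2] at h0
        exact h0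
      · have h0 := h (dec.symm (i, 1))
        show v (od (a i)) = v (od (b i))
        rw [← dec_symm_one (a i), ← dec_symm_one (b i)]
        have e1 : (v ∘ ⇑σ) (ev (dec.symm (i, 1))) = v (dec.symm (a i, 1)) := by
          show v (σ (ev (dec.symm (i, 1)))) = _
          rw [hσ, sigma_ev]
        have e2 : (v ∘ ⇑σ) (od (dec.symm (i, 1))) = v (dec.symm (b i, 1)) := by
          show v (σ (od (dec.symm (i, 1)))) = _
          rw [hσ, sigma_od]
        rw [e1, e2] at h0
        exact h0
    · intro h k
      obtain ⟨q, hq⟩ : ∃ q : Fin m × Fin 2, dec.symm q = k := ⟨dec k, Equiv.symm_apply_apply _ _⟩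
      obtain ⟨i, r⟩ := q
      subst hq
      show v (σ (ev (dec.symm (i, r)))) = v (σ (od (dec.symm (i, r))))
      rw [hσ, sigma_ev, sigma_od]
      have hr : r = 0 ∨ r = 1 := by omega
      rcases hr with rfl | rfl
      · rw [dec_symm_zero, dec_symm_zero]; exact (h i).1
      · rw [dec_symm_one, dec_symm_one]; exact (h i).2
  have hsum : ∑ k, (v ∘ ⇑σ) (ev k) = ∑ i, (v (ev (a i)) + v (od (a i))) := by
    rw [← Equiv.sum_comp (dec.symm : Fin m × Fin 2 ≃ Fin (2 * m))
      (fun k => (v ∘ ⇑σ) (ev k))]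
    rw [Fintype.sum_prod_type]
    apply Finset.sum_congr rfl
    intro i _
    rw [Fin.sum_univ_two]
    have e1 : (v ∘ ⇑σ) (ev (dec.symm (i, 0))) = v (ev (a i)) := by
      show v (σ (ev (dec.symm (i, 0)))) = _
      rw [hσ, sigma_ev, dec_symm_zero]
    have e2 : (v ∘ ⇑σ) (ev (dec.symm (i, 1))) = v (od (a i)) := by
      show v (σ (ev (dec.symm (i, 1)))) = _
      rw [hσ, sigma_ev, dec_symm_one]
    rw [e1, e2]
  constructor
  · rintro ⟨h1, h2⟩
    exact ⟨hpair.mp h1, by rw [← hsum]; exact h2⟩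
  · rintro ⟨h1, h2⟩
    exact ⟨hpair.mpr h1, by rw [hsum]; exact h2⟩

end Sigma
end SdeAux


/-- (Lemma 7.1 of the paper, with `n = 2m` even) given weight-4 vectors
`s₁,…,s_{m−1}` in `F₂^{2m}` with `|sᵢ ∩ sⱼ| = 2` for `|i−j| = 1` and `= 0` otherwise
(`i ≠ j`), and weight-2 vectors `t₁,…,t_m` with `sᵢ = tᵢ + tᵢ₊₁`, the span of the
`d(tᵢ)` and `e(sⱼ)` is isomorphic, via a coordinate permutation, to `d(𝓔ₙ)`. -/
theorem span_dbl_emap_equiv_dblEven (m : ℕ) (hm : 1 ≤ m)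
    (s : Fin (m - 1) → Fin (2 * m) → ZMod 2) (t : Fin m → Fin (2 * m) → ZMod 2)
    (hs4 : ∀ i, wt (s i) = 4) (ht2 : ∀ i, wt (t i) = 2)
    (hst : ∀ i : Fin (m - 1),
      s i = t ⟨(i : ℕ), by have := i.isLt; omega⟩ + t ⟨(i : ℕ) + 1, by have := i.isLt; omega⟩)
    (hint : ∀ i j : Fin (m - 1), i ≠ j →
      interCard (s i) (s j) =
        if (i : ℕ) + 1 = (j : ℕ) ∨ (j : ℕ) + 1 = (i : ℕ) then 2 else 0) :
    ∃ σ : Equiv.Perm (Fin (2 * (2 * m))),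
      (fun v : Fin (2 * (2 * m)) → ZMod 2 => v ∘ σ) ''
          ↑(Submodule.span (ZMod 2)
            (Set.range (fun i => dbl (t i)) ∪ Set.range (fun j => emap (s j)))) =
        dbl '' evenCode (2 * m) := by
  classical
  have ht2' : ∀ i, (SdeAux.supp (t i)).card = 2 := fun i => by
    rw [← SdeAux.wt_eq]; exact ht2 i
  choose a b hab hsuppt using fun i => Finset.card_eq_two.mp (ht2' i)
  have hdisj := SdeAux.tdisj hm s t hs4 ht2 hst hint
  refine ⟨SdeAux.sigmaPerm a b t hab hsuppt hdisj, ?_⟩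
  have hspan : Submodule.span (ZMod 2)
      (Set.range (fun i => dbl (t i)) ∪ Set.range (fun j => emap (s j))) =
      SdeAux.condC a b :=
    le_antisymm (SdeAux.span_le_condC a b t hab hsuppt hdisj s hst)
      (SdeAux.condC_le_span a b t hab hsuppt hdisj hm s hst)
  rw [hspan, SdeAux.dbl_image_eq]
  ext w
  constructor
  · rintro ⟨v, hv, rfl⟩
    exact (SdeAux.transfer a b t hab hsuppt hdisj v).mpr hv
  · intro hw
    refine ⟨w ∘ ⇑(SdeAux.sigmaPerm a b t hab hsuppt hdisj).symm, ?_, ?_⟩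
    · have hcomp : (w ∘ ⇑(SdeAux.sigmaPerm a b t hab hsuppt hdisj).symm) ∘
          ⇑(SdeAux.sigmaPerm a b t hab hsuppt hdisj) = w := by
        funext x; simp
      exact (SdeAux.transfer a b t hab hsuppt hdisj _).mp (by rw [hcomp]; exact hw)
    · funext x; simp
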